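/- Suppose 2ml ≠ 3. Let ε > 0, let B : [−ε, 0) → ℝ be continuous with sup_{x ∈ [−ε,0)} |B(x) + l/x| < ∞, and let g : [−ε, 0) → ℂ be continuous with |g(x)| ≤ C₀ (−x)^{1/2} for some C₀ > 0. If u : [−ε, 0) → ℂ is continuously differentiable and satisfies u'(x) + m B(x) u(x) = g(x) for all x ∈ [−ε, 0), then there exists C₁ > 0 such that |u(x)| ≤ C₁ (−x)^{min(3/2, ml)} for all x ∈ [−ε, 0). -/

import Mathlib

open Set

/-- Suppose `2ml ≠ 3`. If `B` is continuous on `[−ε,0)` with `|B(x) + l/x|`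
bounded, `|g(x)| ≤ C₀(−x)^{1/2}`, and `u' + mBu = g` on `[−ε,0)`, then
`|u(x)| ≤ C₁ (−x)^{min(3/2, ml)}` on `[−ε,0)`. -/
theorem stmt_5 (m l : ℝ) (hm : 0 < m) (hl : 0 < l) (hml : 2*m*l ≠ 3)
    (ε : ℝ) (hε : 0 < ε)
    (B : ℝ → ℝ) (hBcont : ContinuousOn B (Set.Ico (-ε) 0))
    (CB : ℝ) (hCB : ∀ x ∈ Set.Ico (-ε) (0:ℝ), |B x + l/x| ≤ CB)
    (g : ℝ → ℂ) (hgcont : ContinuousOn g (Set.Ico (-ε) 0))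
    (C₀ : ℝ) (hC₀ : 0 < C₀)
    (hgb : ∀ x ∈ Set.Ico (-ε) (0:ℝ), ‖g x‖ ≤ C₀ * (-x) ^ ((1:ℝ)/2))
    (u : ℝ → ℂ)
    (hu : ∀ x ∈ Set.Ico (-ε) (0:ℝ),
      HasDerivWithinAt u (g x - ((m * B x : ℝ) : ℂ) * u x) (Set.Ico (-ε) 0) x) :
    ∃ C₁ > 0, ∀ x ∈ Set.Ico (-ε) (0:ℝ),
      ‖u x‖ ≤ C₁ * (-x) ^ (min (3/2 : ℝ) (m*l)) := by
  have hεs : -ε < (0:ℝ) := neg_lt_zero.mpr hε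
  set s : Set ℝ := Set.Ico (-ε) 0 with hs
  -- basic facts about points of s
  have hsub : ∀ x ∈ s, Icc (-ε) x ⊆ s := fun x hx t ht => ⟨ht.1, lt_of_le_of_lt ht.2 hx.2⟩
  have hxpos : ∀ x ∈ s, 0 < -x := fun x hx => neg_pos.mpr hx.2
  have hxle : ∀ x ∈ s, -x ≤ ε := fun x hx => by
    have := hx.1; linarith
  set F : ℝ → ℝ := fun x => ∫ t in (-ε)..x, B t with hF
  set φ : ℝ → ℝ := fun x => Real.exp (m * F x) with hφ
  set v : ℝ → ℂ := fun x => u x * (φ x : ℂ) with hv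
  have hBint : ∀ x ∈ s, IntervalIntegrable B MeasureTheory.volume (-ε) x :=
    fun x hx => (hBcont.mono (hsub x hx)).intervalIntegrable_of_Icc hx.1
  have hFcont : ∀ x ∈ s, ContinuousOn F (Icc (-ε) x) := by
    intro x hx
    have := intervalIntegral.continuousOn_primitive_interval' (hBint x hx)
      (left_mem_uIcc (a := -ε) (b := x))
    rwa [uIcc_of_le hx.1] at this
  have hFderiv : ∀ x ∈ Ioo (-ε) (0:ℝ), HasDerivAt F (B x) x := by
    intro x hx
    have hxs : x ∈ s := ⟨hx.1.le, hx.2⟩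
    have hnhds : s ∈ nhds x := by
      rw [hs]; exact Ico_mem_nhds hx.1 hx.2
    have hcb : ContinuousAt B x := (hBcont x hxs).continuousAt hnhds
    have hmeas : StronglyMeasurableAtFilter B (nhds x) MeasureTheory.volume :=
      ContinuousOn.stronglyMeasurableAtFilter isOpen_Ioo
        (hBcont.mono (fun t ht => ⟨ht.1.le, ht.2⟩ : Ioo (-ε) (0:ℝ) ⊆ s)) x hx
    exact intervalIntegral.integral_hasDerivAt_right (hBint x hxs) hmeas hcb
  have hucont : ContinuousOn u s := fun x hx => (hu x hx).continuousWithinAt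
  -- the error term E
  set E : ℝ → ℝ := fun x => F x + l * (Real.log (-x) - Real.log ε) with hE
  have hCB0 : 0 ≤ CB := le_trans (abs_nonneg _) (hCB (-ε) ⟨le_refl _, hεs⟩)
  have hEbound : ∀ x ∈ s, |E x| ≤ CB * ε := by
    intro x hx
    have hdivcont : ContinuousOn (fun t : ℝ => l * (1/t)) (Icc (-ε) x) := by
      apply continuousOn_const.mul
      apply ContinuousOn.div continuousOn_const continuousOn_id
      intro t ht
      exact ne_of_lt (lt_of_le_of_lt ht.2 hx.2)
    have hdivint : IntervalIntegrable (fun t : ℝ => l * (1/t)) MeasureTheory.volume (-ε) x :=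
      hdivcont.intervalIntegrable_of_Icc hx.1
    have hoint : IntervalIntegrable (fun t : ℝ => 1/t) MeasureTheory.volume (-ε) x := by
      have : ContinuousOn (fun t : ℝ => 1/t) (Icc (-ε) x) := by
        apply ContinuousOn.div continuousOn_const continuousOn_id
        intro t ht
        exact ne_of_lt (lt_of_le_of_lt ht.2 hx.2)
      exact this.intervalIntegrable_of_Icc hx.1
    have h0 : (0:ℝ) ∉ uIcc (-ε) x := by
      rw [uIcc_of_le hx.1]
      intro h0
      exact absurd h0.2 (not_le.mpr hx.2)
    have hlogint : (∫ t in (-ε)..x, l * (1/t)) = l * (Real.log (-x) - Real.log ε) := by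
      rw [intervalIntegral.integral_const_mul, integral_one_div h0]
      congr 1
      rw [show x / (-ε) = (-x) / ε by ring, Real.log_div (ne_of_gt (hxpos x hx)) (ne_of_gt hε)]
    have hEeq : E x = ∫ t in (-ε)..x, (B t + l * (1/t)) := by
      rw [intervalIntegral.integral_add (hBint x hx) hdivint, hlogint]
    rw [hEeq]
    have hb : ∀ t ∈ Set.uIoc (-ε) x, ‖B t + l * (1/t)‖ ≤ CB := by
      intro t ht
      rw [uIoc_of_le hx.1] at ht
      have hts : t ∈ s := ⟨ht.1.le, lt_of_le_of_lt ht.2 hx.2⟩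
      have := hCB t hts
      rwa [Real.norm_eq_abs, show l * (1/t) = l / t by ring]
    calc ‖∫ t in (-ε)..x, (B t + l * (1/t))‖ ≤ CB * |x - (-ε)| :=
          intervalIntegral.norm_integral_le_of_norm_le_const hb
      _ ≤ CB * ε := by
          apply mul_le_mul_of_nonneg_left _ hCB0
          rw [abs_of_nonneg (by linarith [hx.1])]
          linarith [hx.2]
  -- the explicit form and bounds of φ
  have hφeq : ∀ x ∈ s, φ x = ε ^ (m*l) * (-x) ^ (-(m*l)) * Real.exp (m * E x) := by
    intro x hx
    show Real.exp (m * F x) = _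
    rw [Real.rpow_def_of_pos hε, Real.rpow_def_of_pos (hxpos x hx), ← Real.exp_add,
      ← Real.exp_add]
    congr 1
    have hEx : E x = F x + l * (Real.log (-x) - Real.log ε) := rfl
    rw [hEx]
    ring
  have hφpos : ∀ x, 0 < φ x := fun x => Real.exp_pos _
  set K₁ : ℝ := ε ^ (m*l) * Real.exp (-(m * (CB * ε))) with hK₁
  set K₂ : ℝ := ε ^ (m*l) * Real.exp (m * (CB * ε)) with hK₂
  have hK₁pos : 0 < K₁ := mul_pos (Real.rpow_pos_of_pos hε _) (Real.exp_pos _)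
  have hK₂pos : 0 < K₂ := mul_pos (Real.rpow_pos_of_pos hε _) (Real.exp_pos _)
  have hφub : ∀ x ∈ s, φ x ≤ K₂ * (-x) ^ (-(m*l)) := by
    intro x hx
    rw [hφeq x hx, hK₂]
    have : Real.exp (m * E x) ≤ Real.exp (m * (CB * ε)) := by
      apply Real.exp_le_exp.mpr
      apply mul_le_mul_of_nonneg_left _ hm.le
      exact le_trans (le_abs_self _) (hEbound x hx)
    calc ε ^ (m*l) * (-x) ^ (-(m*l)) * Real.exp (m * E x)
        ≤ ε ^ (m*l) * (-x) ^ (-(m*l)) * Real.exp (m * (CB * ε)) := by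
          have hx0 : (0:ℝ) < -x := hxpos x hx
          apply mul_le_mul_of_nonneg_left this
          positivity
      _ = ε ^ (m*l) * Real.exp (m * (CB * ε)) * (-x) ^ (-(m*l)) := by ring
  have hφlb : ∀ x ∈ s, K₁ * (-x) ^ (-(m*l)) ≤ φ x := by
    intro x hx
    rw [hφeq x hx, hK₁]
    have : Real.exp (-(m * (CB * ε))) ≤ Real.exp (m * E x) := by
      apply Real.exp_le_exp.mpr
      have := (abs_le.mp (hEbound x hx)).1
      nlinarith [hm.le]
    calc ε ^ (m*l) * Real.exp (-(m * (CB * ε))) * (-x) ^ (-(m*l))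
        = ε ^ (m*l) * (-x) ^ (-(m*l)) * Real.exp (-(m * (CB * ε))) := by ring
      _ ≤ ε ^ (m*l) * (-x) ^ (-(m*l)) * Real.exp (m * E x) := by
          have hx0 : (0:ℝ) < -x := hxpos x hx
          apply mul_le_mul_of_nonneg_left this
          positivity
  -- derivative of v at interior points
  have hvderiv : ∀ x ∈ Ioo (-ε) (0:ℝ), HasDerivAt v (g x * (φ x : ℂ)) x := by
    intro x hx
    have hxs : x ∈ s := ⟨hx.1.le, hx.2⟩
    have hnhds : s ∈ nhds x := by
      rw [hs]; exact Ico_mem_nhds hx.1 hx.2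
    have hux : HasDerivAt u (g x - ((m * B x : ℝ) : ℂ) * u x) x :=
      (hu x hxs).hasDerivAt hnhds
    have hφr : HasDerivAt φ (Real.exp (m * F x) * (m * B x)) x :=
      ((hFderiv x hx).const_mul m).exp
    have hφc : HasDerivAt (fun y => ((φ y : ℝ) : ℂ)) ((Real.exp (m * F x) * (m * B x) : ℝ) : ℂ)
        x := hφr.ofReal_comp
    have := hux.mul hφc
    refine this.congr_deriv ?_
    have hφx : φ x = Real.exp (m * F x) := rfl
    rw [hφx]
    push_cast
    ring
  -- fundamental theorem of calculus for v
  have hFTC : ∀ x ∈ s, (∫ t in (-ε)..x, g t * (φ t : ℂ)) = v x - v (-ε) := by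
    intro x hx
    apply intervalIntegral.integral_eq_sub_of_hasDeriv_right_of_le hx.1
    · -- continuity of v on Icc
      apply ContinuousOn.mul (hucont.mono (hsub x hx))
      have : ContinuousOn φ (Icc (-ε) x) :=
        Real.continuous_exp.comp_continuousOn (continuousOn_const.mul (hFcont x hx))
      exact Complex.continuous_ofReal.comp_continuousOn this
    · intro t ht
      exact (hvderiv t ⟨ht.1, lt_trans ht.2 hx.2⟩).hasDerivWithinAt
    · -- interval integrability of g * φ
      apply ContinuousOn.intervalIntegrable_of_Icc hx.1
      apply ContinuousOn.mul (hgcont.mono (hsub x hx))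
      have : ContinuousOn φ (Icc (-ε) x) :=
        Real.continuous_exp.comp_continuousOn (continuousOn_const.mul (hFcont x hx))
      exact Complex.continuous_ofReal.comp_continuousOn this
  -- the exponent q
  set q : ℝ := 3/2 - m*l with hq
  have hq0 : q ≠ 0 := by
    intro h
    apply hml
    rw [hq] at h
    linarith
  -- the power integral
  have hJ : ∀ x ∈ s, (∫ t in (-ε)..x, (-t) ^ (q - 1)) = (ε ^ q - (-x) ^ q) / q := by
    intro x hx
    have key : (∫ t in (-ε)..x, (-t) ^ (q - 1))
        = (fun t : ℝ => -((-t) ^ q / q)) x - (fun t : ℝ => -((-t) ^ q / q)) (-ε) := by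
      apply intervalIntegral.integral_eq_sub_of_hasDerivAt
      · intro t ht
        rw [uIcc_of_le hx.1] at ht
        have ht0 : -t ≠ 0 := ne_of_gt (hxpos t (hsub x hx ht))
        have h1 : HasDerivAt (fun t : ℝ => (-t) ^ q) (q * (-t) ^ (q - 1) * (-1)) t := by
          have := (Real.hasDerivAt_rpow_const (x := -t) (p := q) (Or.inl ht0)).comp t
            (hasDerivAt_neg t)
          simpa [Function.comp_def] using this
        have h2 := (h1.div_const q).neg
        convert h2 using 1
        · rfl
        rw [mul_neg_one, neg_div, neg_neg, mul_div_cancel_left₀ _ hq0]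
      · exact ((continuous_neg.continuousOn.rpow_const
          (fun t ht => Or.inl (ne_of_gt (hxpos t (hsub x hx
            (by rwa [uIcc_of_le hx.1] at ht)))))).intervalIntegrable)
    rw [key]
    have hεe : -(-ε) = ε := neg_neg ε
    simp only [hεe]
    ring
  -- bound on the integral of g * φ
  have hnorm : ∀ t ∈ s, ‖g t * (φ t : ℂ)‖ ≤ C₀ * K₂ * (-t) ^ (q - 1) := by
    intro t ht
    have ht0 : (0:ℝ) < -t := hxpos t ht
    have h1 : ‖g t * (φ t : ℂ)‖ = ‖g t‖ * φ t := by
      rw [norm_mul, Complex.norm_real, Real.norm_eq_abs, abs_of_pos (hφpos t)]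
    rw [h1]
    have h2 : ‖g t‖ * φ t ≤ (C₀ * (-t) ^ ((1:ℝ)/2)) * (K₂ * (-t) ^ (-(m*l))) := by
      apply mul_le_mul (hgb t ht) (hφub t ht) (hφpos t).le
      positivity
    apply h2.trans_eq
    rw [show C₀ * (-t) ^ ((1:ℝ)/2) * (K₂ * (-t) ^ (-(m*l)))
        = C₀ * K₂ * ((-t) ^ ((1:ℝ)/2) * (-t) ^ (-(m*l))) by ring,
      ← Real.rpow_add ht0]
    congr 1
    rw [hq]
    ring
  have hIbound : ∀ x ∈ s, ‖∫ t in (-ε)..x, g t * (φ t : ℂ)‖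
      ≤ C₀ * K₂ * ((ε ^ q - (-x) ^ q) / q) := by
    intro x hx
    have hbint : IntervalIntegrable (fun t : ℝ => C₀ * K₂ * (-t) ^ (q - 1))
        MeasureTheory.volume (-ε) x := by
      apply ContinuousOn.intervalIntegrable_of_Icc hx.1
      apply continuousOn_const.mul
      exact continuous_neg.continuousOn.rpow_const
        (fun t ht => Or.inl (ne_of_gt (hxpos t (hsub x hx ht))))
    have hgφint : IntervalIntegrable (fun t : ℝ => ‖g t * (φ t : ℂ)‖)
        MeasureTheory.volume (-ε) x := by
      apply ContinuousOn.intervalIntegrable_of_Icc hx.1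
      apply ContinuousOn.norm
      apply ContinuousOn.mul (hgcont.mono (hsub x hx))
      have : ContinuousOn φ (Icc (-ε) x) :=
        Real.continuous_exp.comp_continuousOn (continuousOn_const.mul (hFcont x hx))
      exact Complex.continuous_ofReal.comp_continuousOn this
    calc ‖∫ t in (-ε)..x, g t * (φ t : ℂ)‖
        ≤ ∫ t in (-ε)..x, ‖g t * (φ t : ℂ)‖ :=
          intervalIntegral.norm_integral_le_integral_norm hx.1
      _ ≤ ∫ t in (-ε)..x, C₀ * K₂ * (-t) ^ (q - 1) := by
          apply intervalIntegral.integral_mono_on hx.1 hgφint hbint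
          intro t ht
          exact hnorm t (hsub x hx ht)
      _ = C₀ * K₂ * ((ε ^ q - (-x) ^ q) / q) := by
          rw [intervalIntegral.integral_const_mul, hJ x hx]
  -- key case analysis
  have key : ∃ D₂ > 0, ∀ x ∈ s,
      ((ε ^ q - (-x) ^ q) / q) * (-x) ^ (m*l) ≤ D₂ * (-x) ^ (min (3/2 : ℝ) (m*l)) := by
    rcases lt_trichotomy (m*l) (3/2 : ℝ) with hcase | hcase | hcase
    · -- subcritical: m*l < 3/2
      have hqpos : 0 < q := by rw [hq]; linarith
      refine ⟨ε ^ q / q, by positivity, ?_⟩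
      intro x hx
      have ht0 : (0:ℝ) < -x := hxpos x hx
      rw [min_eq_right hcase.le]
      apply mul_le_mul_of_nonneg_right _ (Real.rpow_pos_of_pos ht0 _).le
      apply (div_le_div_iff_of_pos_right hqpos).mpr
      have : (0:ℝ) ≤ (-x) ^ q := (Real.rpow_pos_of_pos ht0 _).le
      linarith
    · exact absurd (by linarith : 2*m*l = 3) hml
    · -- supercritical: 3/2 < m*l
      have hqneg : q < 0 := by rw [hq]; linarith
      refine ⟨1 / (-q), one_div_pos.mpr (by linarith), ?_⟩
      intro x hx
      have ht0 : (0:ℝ) < -x := hxpos x hx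
      rw [min_eq_left hcase.le]
      calc ((ε ^ q - (-x) ^ q) / q) * (-x) ^ (m*l)
          ≤ ((-x) ^ q / (-q)) * (-x) ^ (m*l) := by
            apply mul_le_mul_of_nonneg_right _ (Real.rpow_pos_of_pos ht0 _).le
            rw [show (ε ^ q - (-x) ^ q) / q = ((-x) ^ q - ε ^ q) / (-q) by
              rw [div_neg, ← neg_div]; ring_nf]
            apply (div_le_div_iff_of_pos_right (by linarith : (0:ℝ) < -q)).mpr
            have : (0:ℝ) ≤ ε ^ q := (Real.rpow_pos_of_pos hε _).le
            linarith
        _ = 1 / (-q) * (-x) ^ (3/2 : ℝ) := by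
            rw [div_mul_eq_mul_div, ← Real.rpow_add ht0,
              show q + m*l = 3/2 by rw [hq]; ring]
            ring
  obtain ⟨D₂, hD₂pos, hD₂⟩ := key
  have hμle : min (3/2 : ℝ) (m*l) ≤ m*l := min_le_right _ _
  -- comparing (-x)^(m*l) with (-x)^min
  have key2 : ∀ x ∈ s, (-x) ^ (m*l)
      ≤ ε ^ (m*l - min (3/2 : ℝ) (m*l)) * (-x) ^ (min (3/2 : ℝ) (m*l)) := by
    intro x hx
    have ht0 : (0:ℝ) < -x := hxpos x hx
    have h1 : (-x) ^ (m*l) = (-x) ^ (m*l - min (3/2 : ℝ) (m*l))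
        * (-x) ^ (min (3/2 : ℝ) (m*l)) := by
      rw [← Real.rpow_add ht0]
      congr 1
      ring
    rw [h1]
    apply mul_le_mul_of_nonneg_right _ (Real.rpow_pos_of_pos ht0 _).le
    exact Real.rpow_le_rpow ht0.le (hxle x hx) (by linarith)
  set Dv : ℝ := ‖v (-ε)‖ with hDv
  set Cnum : ℝ := Dv * ε ^ (m*l - min (3/2 : ℝ) (m*l)) + C₀ * K₂ * D₂ with hCnum
  have hCnumpos : 0 < Cnum := by
    have h1 : 0 ≤ Dv * ε ^ (m*l - min (3/2 : ℝ) (m*l)) := by positivity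
    have h2 : 0 < C₀ * K₂ * D₂ := by positivity
    rw [hCnum]
    linarith
  refine ⟨Cnum / K₁, by positivity, ?_⟩
  intro x hx
  have ht0 : (0:ℝ) < -x := hxpos x hx
  -- bound for ‖v x‖
  have hvx : ‖v x‖ ≤ Dv + C₀ * K₂ * ((ε ^ q - (-x) ^ q) / q) := by
    have h1 : v x = v (-ε) + ∫ t in (-ε)..x, g t * (φ t : ℂ) := by
      rw [hFTC x hx]; ring
    rw [h1]
    exact (norm_add_le _ _).trans (by
      apply add_le_add le_rfl (hIbound x hx))
  have huv : ‖u x‖ * φ x = ‖v x‖ := by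
    rw [hv]
    simp only [norm_mul, Complex.norm_real, Real.norm_eq_abs, abs_of_pos (hφpos x)]
  have step1 : ‖u x‖ * (K₁ * (-x) ^ (-(m*l)))
      ≤ Dv + C₀ * K₂ * ((ε ^ q - (-x) ^ q) / q) := by
    calc ‖u x‖ * (K₁ * (-x) ^ (-(m*l))) ≤ ‖u x‖ * φ x :=
          mul_le_mul_of_nonneg_left (hφlb x hx) (norm_nonneg _)
      _ = ‖v x‖ := huv
      _ ≤ _ := hvx
  have hden : (0:ℝ) < K₁ * (-x) ^ (-(m*l)) := by
    have := Real.rpow_pos_of_pos ht0 (-(m*l))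
    positivity
  have step2 : ‖u x‖ ≤ (Dv + C₀ * K₂ * ((ε ^ q - (-x) ^ q) / q))
      * (-x) ^ (m*l) / K₁ := by
    apply ((le_div_iff₀ hden).mpr step1).trans_eq
    rw [Real.rpow_neg ht0.le]
    have hne : ((-x) ^ (m*l) : ℝ) ≠ 0 := (Real.rpow_pos_of_pos ht0 _).ne'
    field_simp
  have step3 : (Dv + C₀ * K₂ * ((ε ^ q - (-x) ^ q) / q)) * (-x) ^ (m*l)
      ≤ Cnum * (-x) ^ (min (3/2 : ℝ) (m*l)) := by
    have ha : Dv * (-x) ^ (m*l)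
        ≤ Dv * (ε ^ (m*l - min (3/2 : ℝ) (m*l)) * (-x) ^ (min (3/2 : ℝ) (m*l))) :=
      mul_le_mul_of_nonneg_left (key2 x hx) (norm_nonneg _)
    have hb : C₀ * K₂ * (((ε ^ q - (-x) ^ q) / q) * (-x) ^ (m*l))
        ≤ C₀ * K₂ * (D₂ * (-x) ^ (min (3/2 : ℝ) (m*l))) :=
      mul_le_mul_of_nonneg_left (hD₂ x hx) (by positivity)
    calc (Dv + C₀ * K₂ * ((ε ^ q - (-x) ^ q) / q)) * (-x) ^ (m*l)
        = Dv * (-x) ^ (m*l)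
          + C₀ * K₂ * (((ε ^ q - (-x) ^ q) / q) * (-x) ^ (m*l)) := by ring
      _ ≤ Dv * (ε ^ (m*l - min (3/2 : ℝ) (m*l)) * (-x) ^ (min (3/2 : ℝ) (m*l)))
          + C₀ * K₂ * (D₂ * (-x) ^ (min (3/2 : ℝ) (m*l))) := add_le_add ha hb
      _ = Cnum * (-x) ^ (min (3/2 : ℝ) (m*l)) := by rw [hCnum]; ring
  calc ‖u x‖ ≤ (Dv + C₀ * K₂ * ((ε ^ q - (-x) ^ q) / q)) * (-x) ^ (m*l) / K₁ := step2
    _ ≤ Cnum * (-x) ^ (min (3/2 : ℝ) (m*l)) / K₁ := by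
        apply (div_le_div_iff_of_pos_right hK₁pos).mpr step3
    _ = Cnum / K₁ * (-x) ^ (min (3/2 : ℝ) (m*l)) := by ring
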